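/- arXiv:1807.05476 — 2 statements merged into one kernel-verified Lean document; each statement's English description precedes it below -/
import Mathlib

section
/- Let $G$ be a compact group with Haar probability measure $m$, let $A_1 \subset G$ be a non-null measurable set, and suppose there is $\mu > 0$ and $0 < c < 1/8$ such that $m(A_1) \leq \mu$ and $m(A_1 x^{-1} \cap A_1) \geq (1 - c)\mu$ for every $x \in A_1$. Then $G_0 = A_1^{-1} A_1$ is an open subgroup of $G$, and moreover $m(A_1 y^{-1} \cap A_1) \geq (1 - 4c)\mu$ for every $y \in G_0 G_0$. -/
open MeasureTheory Set Pointwise Topology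

private lemma img_eq_preimage {G : Type*} [Group G] (g : G) (S : Set G) :
    (fun a => a * g) '' S = (fun a => a * g⁻¹) ⁻¹' S := by
  ext x
  constructor
  · rintro ⟨a, ha, rfl⟩; simpa using ha
  · intro hx; exact ⟨x * g⁻¹, hx, by simp⟩

private lemma meas_img {G : Type*} [Group G] [MeasurableSpace G] [MeasurableMul G]
    (m : Measure G) [m.IsMulRightInvariant]
    (g : G) (S : Set G) : m ((fun a => a * g) '' S) = m S := by
  rw [img_eq_preimage, measure_preimage_mul_right]

private lemma meas_img_set {G : Type*} [Group G] [TopologicalSpace G] [IsTopologicalGroup G]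
    [MeasurableSpace G] [BorelSpace G]
    (g : G) {S : Set G} (hS : MeasurableSet S) :
    MeasurableSet ((fun a => a * g) '' S) := by
  rw [img_eq_preimage]
  exact hS.preimage (measurable_mul_const g⁻¹)

private lemma incl_excl {α : Type*} [MeasurableSpace α] (m : Measure α) [IsFiniteMeasure m]
    {S T U : Set α} (hT : MeasurableSet T) (hSU : S ⊆ U) (hTU : T ⊆ U) :
    (m S).toReal + (m T).toReal - (m U).toReal ≤ (m (S ∩ T)).toReal := by
  have h : m (S ∪ T) + m (S ∩ T) = m S + m T := measure_union_add_inter S hT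
  have h2 : m (S ∪ T) ≤ m U := measure_mono (union_subset hSU hTU)
  have e1 : (m S).toReal + (m T).toReal
      = (m (S ∪ T)).toReal + (m (S ∩ T)).toReal := by
    rw [← ENNReal.toReal_add (measure_ne_top _ _) (measure_ne_top _ _),
        ← ENNReal.toReal_add (measure_ne_top _ _) (measure_ne_top _ _), h]
  have e2 : (m (S ∪ T)).toReal ≤ (m U).toReal :=
    ENNReal.toReal_mono (measure_ne_top _ _) h2
  linarith

theorem stmt_6 {G : Type*} [Group G] [TopologicalSpace G] [IsTopologicalGroup G]
    [CompactSpace G] [MeasurableSpace G] [BorelSpace G]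
    (m : Measure G) [m.IsHaarMeasure] [IsProbabilityMeasure m] [m.IsMulRightInvariant]
    (A₁ : Set G) (hA₁ : MeasurableSet A₁) (hA₁0 : 0 < m A₁)
    (μ : ℝ) (hμ : 0 < μ) (c : ℝ) (hc0 : 0 < c) (hc : c < 1/8)
    (hle : (m A₁).toReal ≤ μ)
    (hbig : ∀ x ∈ A₁, (m (((fun a => a * x⁻¹) '' A₁) ∩ A₁)).toReal ≥ (1 - c) * μ) :
    (∃ G₀ : Subgroup G, (G₀ : Set G) = A₁⁻¹ * A₁ ∧ IsOpen (G₀ : Set G))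
      ∧ ∀ y ∈ (A₁⁻¹ * A₁) * (A₁⁻¹ * A₁),
          (m (((fun a => a * y⁻¹) '' A₁) ∩ A₁)).toReal ≥ (1 - 4 * c) * μ := by
  classical
  obtain ⟨a₀, ha₀⟩ := nonempty_of_measure_ne_zero hA₁0.ne'
  -- Step 1: on A₁⁻¹ * A₁ the intersection measure is at least (1 - 2c) μ.
  have step1 : ∀ y ∈ A₁⁻¹ * A₁,
      (1 - 2 * c) * μ ≤ (m (((fun a => a * y⁻¹) '' A₁) ∩ A₁)).toReal := by
    intro y hy
    obtain ⟨u, hu, v, hv, rfl⟩ := Set.mem_mul.mp hy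
    have hu' : u⁻¹ ∈ A₁ := Set.mem_inv.mp hu
    have hSv := hbig v hv
    have hTu := hbig u⁻¹ hu'
    rw [inv_inv] at hTu
    set S : Set G := ((fun a => a * v⁻¹) '' A₁) ∩ A₁ with hSdef
    set T : Set G := ((fun a => a * u) '' A₁) ∩ A₁ with hTdef
    have hTm : MeasurableSet T := (meas_img_set u hA₁).inter hA₁
    have hST : (1 - 2 * c) * μ ≤ (m (S ∩ T)).toReal := by
      have := incl_excl m hTm (inter_subset_right : S ⊆ A₁)
        (inter_subset_right : T ⊆ A₁)
      linarith
    have hsub : (fun a => a * u⁻¹) '' (S ∩ T)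
        ⊆ ((fun a => a * (u * v)⁻¹) '' A₁) ∩ A₁ := by
      rintro t ⟨s, ⟨⟨⟨a, ha, hsa⟩, hsA⟩, ⟨⟨b, hb, hsb⟩, -⟩⟩, rfl⟩
      constructor
      · exact ⟨a, ha, by rw [← hsa]; group⟩
      · rw [← hsb]
        simpa using hb
    calc (1 - 2 * c) * μ ≤ (m (S ∩ T)).toReal := hST
      _ = (m ((fun a => a * u⁻¹) '' (S ∩ T))).toReal := by rw [meas_img]
      _ ≤ (m (((fun a => a * (u * v)⁻¹) '' A₁) ∩ A₁)).toReal :=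
          ENNReal.toReal_mono (measure_ne_top _ _) (measure_mono hsub)
  -- Step 2: on (A₁⁻¹ * A₁) * (A₁⁻¹ * A₁) the intersection measure is at least (1 - 4c) μ.
  have step2 : ∀ y ∈ (A₁⁻¹ * A₁) * (A₁⁻¹ * A₁),
      (1 - 4 * c) * μ ≤ (m (((fun a => a * y⁻¹) '' A₁) ∩ A₁)).toReal := by
    intro y hy
    obtain ⟨y₁, hy₁, y₂, hy₂, rfl⟩ := Set.mem_mul.mp hy
    have h1 := step1 y₁ hy₁
    have h2 := step1 y₂ hy₂
    set B₁ : Set G := ((fun a => a * y₁⁻¹) '' A₁) ∩ A₁ with hB₁def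
    set B₂ : Set G := ((fun a => a * y₂⁻¹) '' A₁) ∩ A₁ with hB₂def
    set S : Set G := (fun a => a * y₁⁻¹) '' B₂ with hSdef
    have hB₁m : MeasurableSet B₁ := (meas_img_set y₁⁻¹ hA₁).inter hA₁
    have hIE : (m S).toReal + (m B₁).toReal
        - (m ((fun a => a * y₁⁻¹) '' A₁)).toReal ≤ (m (S ∩ B₁)).toReal :=
      incl_excl m hB₁m (image_mono inter_subset_right) inter_subset_left
    have hmS : (m S).toReal = (m B₂).toReal := by rw [hSdef, meas_img]
    have hmU : (m ((fun a => a * y₁⁻¹) '' A₁)).toReal = (m A₁).toReal := by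
      rw [meas_img]
    have hST : (1 - 4 * c) * μ ≤ (m (S ∩ B₁)).toReal := by
      rw [hmS, hmU] at hIE
      linarith
    have hsub : S ∩ B₁ ⊆ ((fun a => a * (y₁ * y₂)⁻¹) '' A₁) ∩ A₁ := by
      rintro t ⟨⟨s, ⟨⟨a, ha, hsa⟩, hsA⟩, rfl⟩, htB₁⟩
      exact ⟨⟨a, ha, by rw [← hsa]; group⟩, htB₁.2⟩
    calc (1 - 4 * c) * μ ≤ (m (S ∩ B₁)).toReal := hST
      _ ≤ (m (((fun a => a * (y₁ * y₂)⁻¹) '' A₁) ∩ A₁)).toReal :=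
          ENNReal.toReal_mono (measure_ne_top _ _) (measure_mono hsub)
  -- closure of A₁⁻¹ * A₁ under multiplication
  have hG0mul : ∀ y ∈ (A₁⁻¹ * A₁) * (A₁⁻¹ * A₁), y ∈ A₁⁻¹ * A₁ := by
    intro y hy
    have h := step2 y hy
    have hpos : 0 < (m (((fun a => a * y⁻¹) '' A₁) ∩ A₁)).toReal :=
      lt_of_lt_of_le (by nlinarith) h
    have hne : (((fun a => a * y⁻¹) '' A₁) ∩ A₁).Nonempty := by
      rw [Set.nonempty_iff_ne_empty]
      intro h0
      rw [h0] at hpos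
      simp at hpos
    obtain ⟨b, ⟨a, haA, rfl⟩, hbA⟩ := hne
    exact ⟨(a * y⁻¹)⁻¹, Set.inv_mem_inv.mpr hbA, a, haA, by group⟩
  have hG0inv : ∀ y ∈ A₁⁻¹ * A₁, y⁻¹ ∈ A₁⁻¹ * A₁ := by
    intro y hy
    obtain ⟨u, hu, v, hv, rfl⟩ := Set.mem_mul.mp hy
    exact ⟨v⁻¹, Set.inv_mem_inv.mpr hv, u⁻¹, Set.mem_inv.mp hu, by group⟩
  -- the subgroup
  let G₀ : Subgroup G :=
    { carrier := A₁⁻¹ * A₁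
      one_mem' := ⟨a₀⁻¹, Set.inv_mem_inv.mpr ha₀, a₀, ha₀, inv_mul_cancel a₀⟩
      mul_mem' := fun {x y} hx hy => hG0mul _ (Set.mul_mem_mul hx hy)
      inv_mem' := fun {x} hx => hG0inv x hx }
  have hG₀car : (G₀ : Set G) = A₁⁻¹ * A₁ := rfl
  -- openness: Steinhaus on A₁ gives a neighborhood of 1 inside the conjugate a₀ G₀ a₀⁻¹.
  have hnhds : A₁ / A₁ ∈ 𝓝 (1 : G) :=
    Measure.div_mem_nhds_one_of_haar_pos m A₁ hA₁ hA₁0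
  let Gc : Subgroup G := G₀.map (MulAut.conj a₀).toMonoidHom
  have hsubGc : A₁ / A₁ ⊆ (Gc : Set G) := by
    intro d hd
    obtain ⟨x, hx, y, hy, rfl⟩ := Set.mem_div.mp hd
    have hx' : a₀⁻¹ * x ∈ G₀ := ⟨a₀⁻¹, Set.inv_mem_inv.mpr ha₀, x, hx, rfl⟩
    have hy' : a₀⁻¹ * y ∈ G₀ := ⟨a₀⁻¹, Set.inv_mem_inv.mpr ha₀, y, hy, rfl⟩
    refine ⟨(a₀⁻¹ * x) * (a₀⁻¹ * y)⁻¹, mul_mem hx' (inv_mem hy'), ?_⟩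
    simp only [MulEquiv.toMonoidHom_eq_coe, MonoidHom.coe_coe, MulAut.conj_apply]
    rw [div_eq_mul_inv]
    group
  have hGcopen : IsOpen (Gc : Set G) :=
    Subgroup.isOpen_of_mem_nhds Gc (Filter.mem_of_superset hnhds hsubGc)
  have hG₀eq : (G₀ : Set G) = (fun g => a₀ * g * a₀⁻¹) ⁻¹' (Gc : Set G) := by
    ext g
    constructor
    · intro hg
      exact ⟨g, hg, by simp [MulAut.conj_apply]⟩
    · rintro ⟨h, hh, hconj⟩
      simp only [MulEquiv.toMonoidHom_eq_coe, MonoidHom.coe_coe, MulAut.conj_apply] at hconj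
      have : h = g := by
        have := hconj
        group at this ⊢
        exact mul_left_cancel (mul_right_cancel this)
      rwa [← this]
  have hG₀open : IsOpen (G₀ : Set G) := by
    rw [hG₀eq]
    exact hGcopen.preimage (by fun_prop)
  exact ⟨⟨G₀, hG₀car, hG₀open⟩, step2⟩
end

section
/- Let $G$ be a compact group with Haar probability measure $m$, let $H < G$ be a closed subgroup, and let $G_0 < G$ be an open subgroup. Suppose $A \subset G$ is a measurable set satisfying $Ah = A$ for all $h \in H$, and there exists $g \in G$ with $m(A \triangle g G_0) < \frac{1}{2} m(G_0)$. Then $H \subset G_0$. -/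
open MeasureTheory Set Pointwise

theorem stmt_10 {G : Type*} [Group G] [TopologicalSpace G] [IsTopologicalGroup G]
    [CompactSpace G] [MeasurableSpace G] [BorelSpace G]
    (m : Measure G) [m.IsHaarMeasure] [IsProbabilityMeasure m] [m.IsMulRightInvariant]
    (H G₀ : Subgroup G) (hH : IsClosed (H : Set G)) (hG₀ : IsOpen (G₀ : Set G))
    (A : Set G) (hA : MeasurableSet A)
    (hAH : ∀ h ∈ H, (fun a => a * h) '' A = A)
    (g : G)
    (hclose : (m (symmDiff A (g • (G₀ : Set G)))).toReal
        < (1/2) * (m (G₀ : Set G)).toReal) :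
    (H : Set G) ⊆ (G₀ : Set G) := by
  intro h hh
  by_contra hhG
  set s : Set G := g • (G₀ : Set G) with hs
  have hmeas_s : MeasurableSet s := (hG₀.smul g).measurableSet
  -- measure of image under right multiplication
  have himg : ∀ t : Set G, (fun a => a * h) '' t = (fun a => a * h⁻¹) ⁻¹' t := by
    intro t
    ext x
    constructor
    · rintro ⟨y, hy, rfl⟩; simpa using hy
    · intro hx; exact ⟨x * h⁻¹, hx, by simp⟩
  have hmul : ∀ t : Set G, m ((fun a => a * h) '' t) = m t := by
    intro t
    rw [himg t]
    exact measure_preimage_mul_right m h⁻¹ t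
  -- disjointness
  have hdisj : Disjoint ((fun a => a * h) '' s) s := by
    rw [Set.disjoint_left]
    rintro x ⟨y, hy, rfl⟩ hx
    obtain ⟨a, ha, rfl⟩ := hy
    obtain ⟨b, hb, hb'⟩ := hx
    apply hhG
    have hab : a * h = b := by
      have : g * (a * h) = g * b := by
        simpa [smul_eq_mul, mul_assoc] using hb'.symm
      exact mul_left_cancel this
    have : h = a⁻¹ * b := by rw [← hab]; group
    rw [this]
    exact G₀.mul_mem (G₀.inv_mem ha) hb
  -- measure of symmDiff of disjoint sets
  have hsymm_eq : m (symmDiff ((fun a => a * h) '' s) s)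
      = m ((fun a => a * h) '' s) + m s := by
    rw [hdisj.symmDiff_eq_sup]
    exact measure_union hdisj hmeas_s
  have hsG : m s = m (G₀ : Set G) := measure_smul m g _
  have hG₀pos : 0 < m (G₀ : Set G) := hG₀.measure_pos m ⟨1, Subgroup.one_mem _⟩
  -- triangle inequality
  have htri : m (symmDiff ((fun a => a * h) '' s) s)
      ≤ m (symmDiff ((fun a => a * h) '' s) A) + m (symmDiff A s) :=
    measure_symmDiff_le _ _ _
  have himgA : m (symmDiff ((fun a => a * h) '' s) A) = m (symmDiff A s) := by
    conv_lhs => rw [← hAH h hh]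
    rw [← Set.image_symmDiff (mul_left_injective h), hmul, symmDiff_comm]
  have hbound : m (symmDiff ((fun a => a * h) '' s) s) ≤ 2 * m (symmDiff A s) := by
    rw [two_mul]
    calc m (symmDiff ((fun a => a * h) '' s) s)
        ≤ m (symmDiff ((fun a => a * h) '' s) A) + m (symmDiff A s) := htri
      _ = m (symmDiff A s) + m (symmDiff A s) := by rw [himgA]
  have hval : m (symmDiff ((fun a => a * h) '' s) s) = 2 * m (G₀ : Set G) := by
    rw [hsymm_eq, hmul, hsG, two_mul]
  rw [hval] at hbound
  -- pass to reals
  have hfin : m (symmDiff A s) ≠ ⊤ := measure_ne_top m _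
  have hfinG : m (G₀ : Set G) ≠ ⊤ := measure_ne_top m _
  have h1 : (m (G₀ : Set G)).toReal ≤ 2 * (m (symmDiff A s)).toReal := by
    have := ENNReal.toReal_mono (by finiteness) hbound
    simp only [ENNReal.toReal_mul, ENNReal.toReal_ofNat] at this
    linarith [ENNReal.toReal_nonneg (a := m (symmDiff A s))]
  have hGpos' : 0 < (m (G₀ : Set G)).toReal := ENNReal.toReal_pos hG₀pos.ne' hfinG
  rw [hs] at h1
  nlinarith
end
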